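/- Suppose the magnetic field B = B(t) is independent of x (possibly time-dependent), and let E(x,t) be continuously differentiable. Then the one-step map (xⁿ, v^{n−1/2}) ↦ (x^{n+1}, v^{n+1/2}) of the filtered Boris algorithm preserves volume in phase space ℝ³ × ℝ³ exactly: its Jacobian matrix has determinant 1. (The map is a composition of the shear v^{n−1/2} ↦ v^{n−1/2} + (h/2)Ψ(hB̂(tⁿ))E(xⁿ,tⁿ) that changes only the velocity by a function of the position, the rotation v ↦ exp(−hB̂(tⁿ))v by an orthogonal matrix of determinant 1, a second such shear, and the shear xⁿ ↦ xⁿ + h v^{n+1/2} that changes only the position by a function of the velocity.) -/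

import Mathlib

noncomputable section

attribute [local instance] Matrix.normedAddCommGroup Matrix.normedSpace

/-- The skew-symmetric matrix `B̂` associated with `B ∈ ℝ³`, so that `B̂ v = B × v`. -/
def hat (B : Fin 3 → ℝ) : Matrix (Fin 3) (Fin 3) ℝ :=
  !![0, -B 2, B 1; B 2, 0, -B 0; -B 1, B 0, 0]

/-- The Euclidean norm of a vector in `ℝ³`. -/
def enorm3 (B : Fin 3 → ℝ) : ℝ := Real.sqrt (B 0 ^ 2 + B 1 ^ 2 + B 2 ^ 2)

/-- `tanc(ξ) = tan(ξ)/ξ`, extended by `1` at `0`. -/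
def tanc (x : ℝ) : ℝ := if x = 0 then 1 else Real.tan x / x

/-- The filter matrix `Ψ(hB̂)` with `Ψ(ζ) = tanch(ζ/2)`, evaluated via the Rodriguez-type
formula `Ψ(hB̂) = I + ((1 − tanc(hb/2))/b²) B̂²` with `b = |B|`. -/
def PsiMat (h : ℝ) (B : Fin 3 → ℝ) : Matrix (Fin 3) (Fin 3) ℝ :=
  1 + ((1 - tanc (h * enorm3 B / 2)) / enorm3 B ^ 2) • hat B ^ 2

open Matrix
private abbrev V3 := Fin 3 → ℝ

private def bb : Module.Basis (Fin 3 ⊕ Fin 3) ℝ (V3 × V3) :=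
  (Pi.basisFun ℝ (Fin 3)).prod (Pi.basisFun ℝ (Fin 3))

private lemma toMatrix_blocks (A B C D : Matrix (Fin 3) (Fin 3) ℝ) :
    LinearMap.toMatrix bb bb
      (LinearMap.prod
        ((A.mulVecLin).comp (LinearMap.fst ℝ V3 V3) + (B.mulVecLin).comp (LinearMap.snd ℝ V3 V3))
        ((C.mulVecLin).comp (LinearMap.fst ℝ V3 V3) + (D.mulVecLin).comp (LinearMap.snd ℝ V3 V3)))
      = Matrix.fromBlocks A B C D := by
  ext i j
  rcases i with i | i <;> rcases j with j | j <;>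
    simp [LinearMap.toMatrix_apply, bb, Module.Basis.prod_apply, Matrix.mulVec_single, fromBlocks,
      Pi.basisFun_apply, Matrix.mulVecLin_apply]

private lemma det_blocks (A B C D : Matrix (Fin 3) (Fin 3) ℝ) :
    LinearMap.det
      (LinearMap.prod
        ((A.mulVecLin).comp (LinearMap.fst ℝ V3 V3) + (B.mulVecLin).comp (LinearMap.snd ℝ V3 V3))
        ((C.mulVecLin).comp (LinearMap.fst ℝ V3 V3) + (D.mulVecLin).comp (LinearMap.snd ℝ V3 V3)))
      = (Matrix.fromBlocks A B C D).det := by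
  rw [← LinearMap.det_toMatrix bb, toMatrix_blocks]

private lemma det_exp_skew (S : Matrix (Fin 3) (Fin 3) ℝ) (hS : Sᵀ = -S) :
    (NormedSpace.exp S).det = 1 := by
  have h2 : NormedSpace.exp S
      = NormedSpace.exp ((2⁻¹ : ℝ) • S) * NormedSpace.exp ((2⁻¹ : ℝ) • S) := by
    rw [← Matrix.exp_add_of_commute _ _ (Commute.refl _)]
    congr 1
    module
  have hx : 0 ≤ (NormedSpace.exp S).det := by
    rw [h2, Matrix.det_mul]; exact mul_self_nonneg _
  have hinv : (NormedSpace.exp S).det * (NormedSpace.exp (-S)).det = 1 := by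
    rw [← Matrix.det_mul, ← Matrix.exp_add_of_commute _ _ ((Commute.refl S).neg_right)]
    simp
  have hT : (NormedSpace.exp (-S)).det = (NormedSpace.exp S).det := by
    rw [← hS, Matrix.exp_transpose, Matrix.det_transpose]
  rw [hT] at hinv
  nlinarith [hx, hinv]

private lemma hat_transpose (B : Fin 3 → ℝ) (c : ℝ) : (c • hat B)ᵀ = -(c • hat B) := by
  rw [Matrix.transpose_smul, ← smul_neg]
  congr 1
  ext i j
  fin_cases i <;> fin_cases j <;> simp [hat]

/-- For a magnetic field `B = B(t)` independent of `x` and a continuously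
differentiable electric field `E`, the one-step map `(xⁿ, v^{n−1/2}) ↦ (x^{n+1}, v^{n+1/2})`
of the filtered Boris algorithm preserves volume in phase space exactly: it is differentiable
and its Jacobian has determinant `1`. -/
theorem stmt16 (Bt : ℝ → Fin 3 → ℝ) (E : (Fin 3 → ℝ) → ℝ → Fin 3 → ℝ)
    (hE : ContDiff ℝ 1 fun p : (Fin 3 → ℝ) × ℝ => E p.1 p.2) (h : ℝ) (n : ℕ) :
    let tn : ℝ := n * h
    -- the one-step map (xⁿ, v^{n-1/2}) ↦ (x^{n+1}, v^{n+1/2}):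
    let F : (Fin 3 → ℝ) × (Fin 3 → ℝ) → (Fin 3 → ℝ) × (Fin 3 → ℝ) := fun p =>
      let vplus := p.2 + (h / 2) • (PsiMat h (Bt tn)).mulVec (E p.1 tn)
      let vminus := (NormedSpace.exp ((-h) • hat (Bt tn))).mulVec vplus
      let vplushalf := vminus + (h / 2) • (PsiMat h (Bt tn)).mulVec (E p.1 tn)
      (p.1 + h • vplushalf, vplushalf)
    ∀ p : (Fin 3 → ℝ) × (Fin 3 → ℝ),
      DifferentiableAt ℝ F p ∧ LinearMap.det (fderiv ℝ F p).toLinearMap = 1 := by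
  intro tn F p
  set M : Matrix (Fin 3) (Fin 3) ℝ := NormedSpace.exp ((-h) • hat (Bt tn)) with hMdef
  set A : Matrix (Fin 3) (Fin 3) ℝ := PsiMat h (Bt tn) with hAdef
  set φ : V3 → V3 := fun x => (h / 2) • A.mulVec (E x tn) with hφdef
  -- differentiability of φ
  have hEx : Differentiable ℝ fun x : V3 => E x tn :=
    (hE.differentiable one_ne_zero).comp (differentiable_id.prodMk (differentiable_const tn))
  have hφ : Differentiable ℝ φ := by
    have := (A.mulVecLin.toContinuousLinearMap.differentiable.comp hEx).const_smul (h / 2)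
    exact this
  set D : V3 →L[ℝ] V3 := fderiv ℝ φ p.1 with hDdef
  have hD : HasFDerivAt φ D p.1 := (hφ p.1).hasFDerivAt
  set fst := ContinuousLinearMap.fst ℝ V3 V3
  set snd := ContinuousLinearMap.snd ℝ V3 V3
  set Mm : V3 →L[ℝ] V3 := M.mulVecLin.toContinuousLinearMap with hMmdef
  set W : V3 × V3 →L[ℝ] V3 := Mm.comp (snd + D.comp fst) + D.comp fst with hWdef
  set L : V3 × V3 →L[ℝ] V3 × V3 := (fst + h • W).prod W with hLdef
  have h1 : HasFDerivAt (fun q : V3 × V3 => φ q.1) (D.comp fst) p :=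
    hD.comp p hasFDerivAt_fst
  have h2 : HasFDerivAt (fun q : V3 × V3 => q.2 + φ q.1) (snd + D.comp fst) p :=
    hasFDerivAt_snd.add h1
  have h3 : HasFDerivAt (fun q : V3 × V3 => Mm (q.2 + φ q.1)) (Mm.comp (snd + D.comp fst)) p :=
    Mm.hasFDerivAt.comp p h2
  have hG : HasFDerivAt (fun q : V3 × V3 => M.mulVec (q.2 + φ q.1) + φ q.1) W p := h3.add h1
  have h4 : HasFDerivAt
      (fun q : V3 × V3 => q.1 + h • (M.mulVec (q.2 + φ q.1) + φ q.1)) (fst + h • W) p :=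
    hasFDerivAt_fst.add (hG.const_smul h)
  have hF : HasFDerivAt F L p := h4.prodMk hG
  refine ⟨hF.differentiableAt, ?_⟩
  rw [hF.fderiv]
  -- determinant computation
  set J : Matrix (Fin 3) (Fin 3) ℝ := LinearMap.toMatrix' (D : V3 →ₗ[ℝ] V3) with hJdef
  have hJ : ∀ x, J.mulVec x = D x := by
    intro x
    rw [← Matrix.toLin'_apply, hJdef, Matrix.toLin'_toMatrix']
    rfl
  set Gm : Matrix (Fin 3) (Fin 3) ℝ := M * J + J with hGmdef
  have hLmat : (L : V3 × V3 →ₗ[ℝ] V3 × V3) =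
      LinearMap.prod
        (((1 + h • Gm).mulVecLin).comp (LinearMap.fst ℝ V3 V3)
          + ((h • M).mulVecLin).comp (LinearMap.snd ℝ V3 V3))
        ((Gm.mulVecLin).comp (LinearMap.fst ℝ V3 V3)
          + (M.mulVecLin).comp (LinearMap.snd ℝ V3 V3)) := by
    apply LinearMap.ext
    rintro ⟨x, v⟩
    have hMm : ∀ y, Mm y = M.mulVec y := fun _ => rfl
    have e1 : fst (x, v) = x := rfl
    have e2 : snd (x, v) = v := rfl
    apply Prod.ext <;>
      simp [hLdef, hWdef, hMm, ← hJ, Matrix.add_mulVec, Matrix.smul_mulVec,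
        Matrix.one_mulVec, Matrix.mulVec_add, ← Matrix.mulVec_mulVec, hGmdef, smul_add, e1, e2] <;>
      abel
  rw [hLmat, det_blocks]
  have hfac : Matrix.fromBlocks (1 + h • Gm) (h • M) Gm M
      = Matrix.fromBlocks 1 (h • (1 : Matrix (Fin 3) (Fin 3) ℝ)) 0 1
        * Matrix.fromBlocks 1 0 Gm M := by
    rw [Matrix.fromBlocks_multiply]
    congr 1 <;> simp [Matrix.smul_mul]
  rw [hfac, Matrix.det_mul, Matrix.det_fromBlocks_zero₂₁, Matrix.det_fromBlocks_zero₁₂,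
    Matrix.det_one]
  have : M.det = 1 := det_exp_skew _ (hat_transpose (Bt tn) (-h))
  rw [this]
  norm_num
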